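/- Let A=(a_ij) be an indecomposable, doubly-laced symmetrizable GCM satisfying condition (★), and suppose X_sh={p} is a single index, or X_sh={p,q} with a_pq=a_qp=−1 (type A_1 or A_2). If β_1,β_2∈W·{α_s : s∈X_sh} are real roots with ⟨β_1∨,β_2⟩=⟨β_2∨,β_1⟩=0 (a pair of type A_1×A_1), then β_2−β_1 is a real root of A. Consequently there is no π-system of type A_1×A_1 in A contained wholly in the shortest real roots. -/
import Mathlib


/-- An integer matrix is a generalized Cartan matrix. -/
def IsGCM {n : ℕ} (A : Matrix (Fin n) (Fin n) ℤ) : Prop :=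
  (∀ i, A i i = 2) ∧ (∀ i j, i ≠ j → A i j ≤ 0) ∧ (∀ i j, A i j = 0 → A j i = 0)

/-- `d` is a symmetrizer of `A`: positive rationals with `dᵢ aᵢⱼ = dⱼ aⱼᵢ`. -/
def IsSymmetrizer {n : ℕ} (A : Matrix (Fin n) (Fin n) ℤ) (d : Fin n → ℚ) : Prop :=
  (∀ i, 0 < d i) ∧ ∀ i j, d i * A i j = d j * A j i

/-- The pairing `⟨γ∨, β⟩` between the coroot lattice and the root lattice:
in coordinates (γ in the coroot basis, β in the root basis) it is `∑ γᵢ aᵢⱼ βⱼ`,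
so that `⟨αᵢ∨, αⱼ⟩ = aᵢⱼ`. -/
def pairing {n : ℕ} (A : Matrix (Fin n) (Fin n) ℤ) (y x : Fin n → ℤ) : ℤ :=
  ∑ i, ∑ j, y i * A i j * x j

/-- Simple reflection `s_k` acting on the root lattice: `s_k x = x − ⟨α_k∨, x⟩ α_k`. -/
def sRoot {n : ℕ} (A : Matrix (Fin n) (Fin n) ℤ) (k : Fin n) (x : Fin n → ℤ) : Fin n → ℤ :=
  fun i => x i - (if i = k then ∑ j, A k j * x j else 0)

/-- Simple reflection `s_k` acting on the coroot lattice: `s_k(αⱼ∨) = αⱼ∨ − aⱼₖ α_k∨`. -/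
def sCoroot {n : ℕ} (A : Matrix (Fin n) (Fin n) ℤ) (k : Fin n) (y : Fin n → ℤ) : Fin n → ℤ :=
  fun i => y i - (if i = k then ∑ j, y j * A j k else 0)

/-- Action on the root lattice of a Weyl group element given as a word in simple reflections. -/
def actRoot {n : ℕ} (A : Matrix (Fin n) (Fin n) ℤ) (w : List (Fin n)) (x : Fin n → ℤ) :
    Fin n → ℤ :=
  w.foldr (sRoot A) x

/-- Action on the coroot lattice of a Weyl group element given as a word in simple reflections. -/
def actCoroot {n : ℕ} (A : Matrix (Fin n) (Fin n) ℤ) (w : List (Fin n)) (y : Fin n → ℤ) :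
    Fin n → ℤ :=
  w.foldr (sCoroot A) y

/-- The invariant symmetric bilinear form on `Q ⊗ ℚ` determined by a symmetrizer `d`:
`(αᵢ, αⱼ) = dᵢ aᵢⱼ`. -/
def formQ {n : ℕ} (A : Matrix (Fin n) (Fin n) ℤ) (d : Fin n → ℚ) (x y : Fin n → ℤ) : ℚ :=
  ∑ i, ∑ j, d i * (A i j : ℚ) * (x i : ℚ) * (y j : ℚ)
section helpers
variable {n : ℕ} (A : Matrix (Fin n) (Fin n) ℤ) (d : Fin n → ℚ)

lemma pairing_sub_left (y y' x : Fin n → ℤ) :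
    pairing A (y - y') x = pairing A y x - pairing A y' x := by
  simp [pairing, sub_mul, Finset.sum_sub_distrib]

lemma pairing_sub_right (y x x' : Fin n → ℤ) :
    pairing A y (x - x') = pairing A y x - pairing A y x' := by
  simp [pairing, mul_sub, Finset.sum_sub_distrib]

lemma pairing_single_left (k : Fin n) (t : ℤ) (x : Fin n → ℤ) :
    pairing A (Pi.single k t) x = t * ∑ j, A k j * x j := by
  simp [pairing, Pi.single_apply, ite_mul, Finset.mul_sum, mul_assoc]

lemma pairing_single_right (y : Fin n → ℤ) (k : Fin n) (t : ℤ) :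
    pairing A y (Pi.single k t) = (∑ i, y i * A i k) * t := by
  simp [pairing, Pi.single_apply, mul_ite, Finset.sum_mul]

lemma pairing_single_single (s t : Fin n) (a b : ℤ) :
    pairing A (Pi.single s a) (Pi.single t b) = a * A s t * b := by
  rw [pairing_single_left]
  simp [Pi.single_apply, mul_ite, mul_assoc]

lemma sRoot_eq (k : Fin n) (x : Fin n → ℤ) :
    sRoot A k x = x - Pi.single k (∑ j, A k j * x j) := by
  funext i; simp [sRoot, Pi.single_apply]

lemma sCoroot_eq (k : Fin n) (y : Fin n → ℤ) :
    sCoroot A k y = y - Pi.single k (∑ j, y j * A j k) := by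
  funext i; simp [sCoroot, Pi.single_apply]

lemma sum_sRoot (k : Fin n) (x : Fin n → ℤ) (h2 : A k k = 2) :
    (∑ j, A k j * (sRoot A k x) j) = -(∑ j, A k j * x j) := by
  rw [sRoot_eq]
  simp only [Pi.sub_apply, mul_sub, Finset.sum_sub_distrib, Pi.single_apply, mul_ite, mul_zero,
    Finset.sum_ite_eq', Finset.mem_univ, if_true, h2]
  ring

lemma sRoot_invol (k : Fin n) (x : Fin n → ℤ) (h2 : A k k = 2) :
    sRoot A k (sRoot A k x) = x := by
  rw [sRoot_eq A k (sRoot A k x), sum_sRoot A k x h2, sRoot_eq]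
  simp [Pi.single_neg, sub_sub]

lemma sum_sCoroot (k : Fin n) (y : Fin n → ℤ) (h2 : A k k = 2) :
    (∑ j, (sCoroot A k y) j * A j k) = -(∑ j, y j * A j k) := by
  rw [sCoroot_eq]
  simp only [Pi.sub_apply, sub_mul, Finset.sum_sub_distrib, Pi.single_apply, ite_mul, zero_mul,
    Finset.sum_ite_eq', Finset.mem_univ, if_true, h2]
  ring

lemma sCoroot_invol (k : Fin n) (y : Fin n → ℤ) (h2 : A k k = 2) :
    sCoroot A k (sCoroot A k y) = y := by
  rw [sCoroot_eq A k (sCoroot A k y), sum_sCoroot A k y h2, sCoroot_eq]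
  simp [Pi.single_neg, sub_sub]

lemma pairing_sk (k : Fin n) (y x : Fin n → ℤ) (h2 : A k k = 2) :
    pairing A (sCoroot A k y) (sRoot A k x) = pairing A y x := by
  rw [sRoot_eq, sCoroot_eq, pairing_sub_left, pairing_sub_right, pairing_sub_right,
    pairing_single_left, pairing_single_right, pairing_single_single, h2]
  ring

end helpers
section helpers2
variable {n : ℕ} (A : Matrix (Fin n) (Fin n) ℤ) (d : Fin n → ℚ)

lemma formQ_eq (x y : Fin n → ℤ) :
    formQ A d x y = ∑ i, (x i : ℚ) * ∑ j, d i * (A i j : ℚ) * (y j : ℚ) := by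
  exact Finset.sum_congr rfl fun i _ => by rw [Finset.mul_sum]; exact Finset.sum_congr rfl fun j _ => by ring

lemma formQ_single_left (k : Fin n) (t : ℤ) (y : Fin n → ℤ) :
    formQ A d (Pi.single k t) y = (t : ℚ) * ∑ j, d k * (A k j : ℚ) * (y j : ℚ) := by
  rw [formQ_eq]
  simp only [Pi.single_apply]
  push_cast
  simp only [ite_mul, zero_mul, Finset.sum_ite_eq', Finset.mem_univ, if_true]

lemma formQ_single_right (x : Fin n → ℤ) (k : Fin n) (t : ℤ) :
    formQ A d x (Pi.single k t) = (∑ i, d i * (A i k : ℚ) * (x i : ℚ)) * (t : ℚ) := by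
  simp only [formQ_eq, Pi.single_apply]
  push_cast
  simp only [mul_ite, ite_mul, mul_zero, zero_mul, Finset.sum_ite_eq', Finset.mem_univ, if_true,
    Finset.sum_mul]
  exact Finset.sum_congr rfl fun i _ => by ring

lemma formQ_single_single (s t : Fin n) (a b : ℤ) :
    formQ A d (Pi.single s a) (Pi.single t b) = (a : ℚ) * (d s * (A s t : ℚ)) * (b : ℚ) := by
  rw [formQ_single_left]
  simp only [Pi.single_apply]
  push_cast
  simp only [mul_ite, mul_zero, Finset.sum_ite_eq', Finset.mem_univ, if_true]
  ring

lemma formQ_sub_left (x x' y : Fin n → ℤ) :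
    formQ A d (x - x') y = formQ A d x y - formQ A d x' y := by
  simp only [formQ_eq, Pi.sub_apply]
  push_cast
  simp [sub_mul, Finset.sum_sub_distrib]

lemma formQ_sub_right (x y y' : Fin n → ℤ) :
    formQ A d x (y - y') = formQ A d x y - formQ A d x y' := by
  simp only [formQ_eq, Pi.sub_apply]
  push_cast
  simp [mul_sub, sub_mul, Finset.sum_sub_distrib, Finset.mul_sum]

end helpers2

section helpers3
variable {n : ℕ} (A : Matrix (Fin n) (Fin n) ℤ) (d : Fin n → ℚ)

lemma actRoot_cons (k : Fin n) (w : List (Fin n)) (x : Fin n → ℤ) :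
    actRoot A (k :: w) x = sRoot A k (actRoot A w x) := rfl

lemma actCoroot_cons (k : Fin n) (w : List (Fin n)) (y : Fin n → ℤ) :
    actCoroot A (k :: w) y = sCoroot A k (actCoroot A w y) := rfl

lemma formQ_symm (hd : ∀ i j, d i * A i j = d j * A j i) (x y : Fin n → ℤ) :
    formQ A d x y = formQ A d y x := by
  unfold formQ
  rw [Finset.sum_comm]
  refine Finset.sum_congr rfl fun i _ => Finset.sum_congr rfl fun j _ => ?_
  linear_combination ((x j : ℚ) * (y i : ℚ)) * hd j i

lemma formQ_sk (hd : ∀ i j, d i * A i j = d j * A j i) (k : Fin n) (h2 : A k k = 2)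
    (x y : Fin n → ℤ) :
    formQ A d (sRoot A k x) (sRoot A k y) = formQ A d x y := by
  rw [sRoot_eq, sRoot_eq, formQ_sub_left, formQ_sub_right, formQ_sub_right,
    formQ_single_left, formQ_single_right, formQ_single_single, h2]
  have e1 : (∑ j, d k * (A k j : ℚ) * (y j : ℚ)) = d k * ((∑ j, A k j * y j : ℤ) : ℚ) := by
    push_cast; rw [Finset.mul_sum]; exact Finset.sum_congr rfl fun j _ => by ring
  have e2 : (∑ i, d i * (A i k : ℚ) * (x i : ℚ)) = d k * ((∑ j, A k j * x j : ℤ) : ℚ) := by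
    push_cast
    rw [Finset.mul_sum]
    exact Finset.sum_congr rfl fun i _ => by linear_combination (x i : ℚ) * hd i k
  rw [e1, e2]
  push_cast
  ring

lemma formQ_act (hd : ∀ i j, d i * A i j = d j * A j i) (h2 : ∀ k, A k k = 2)
    (w : List (Fin n)) (x y : Fin n → ℤ) :
    formQ A d (actRoot A w x) (actRoot A w y) = formQ A d x y := by
  induction w with
  | nil => rfl
  | cons k w ih => rw [actRoot_cons, actRoot_cons, formQ_sk A d hd k (h2 k), ih]

lemma pairing_act (h2 : ∀ k, A k k = 2) (w : List (Fin n)) (y x : Fin n → ℤ) :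
    pairing A (actCoroot A w y) (actRoot A w x) = pairing A y x := by
  induction w with
  | nil => rfl
  | cons k w ih => rw [actRoot_cons, actCoroot_cons, pairing_sk A k _ _ (h2 k), ih]

lemma formQ_eq_pairing (hd : ∀ i j, d i * A i j = d j * A j i) (h2 : ∀ k, A k k = 2)
    (w : List (Fin n)) (s : Fin n) (x : Fin n → ℤ) :
    formQ A d (actRoot A w (Pi.single s 1)) x
      = d s * ((pairing A (actCoroot A w (Pi.single s 1)) x : ℤ) : ℚ) := by
  induction w generalizing x with
  | nil =>
    show formQ A d (Pi.single s 1) x = d s * ((pairing A (Pi.single s 1) x : ℤ) : ℚ)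
    rw [formQ_single_left, pairing_single_left]
    push_cast
    simp only [one_mul, Finset.mul_sum]
    exact Finset.sum_congr rfl fun j _ => by ring
  | cons k w ih =>
    rw [actRoot_cons, actCoroot_cons]
    have hx : x = sRoot A k (sRoot A k x) := (sRoot_invol A k x (h2 k)).symm
    calc formQ A d (sRoot A k (actRoot A w (Pi.single s 1))) x
        = formQ A d (sRoot A k (actRoot A w (Pi.single s 1))) (sRoot A k (sRoot A k x)) := by
          rw [← hx]
      _ = formQ A d (actRoot A w (Pi.single s 1)) (sRoot A k x) := formQ_sk A d hd k (h2 k) _ _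
      _ = d s * ((pairing A (actCoroot A w (Pi.single s 1)) (sRoot A k x) : ℤ) : ℚ) := ih _
      _ = d s * ((pairing A (sCoroot A k (actCoroot A w (Pi.single s 1)))
            (sRoot A k (sRoot A k x)) : ℤ) : ℚ) := by rw [pairing_sk A k _ _ (h2 k)]
      _ = _ := by rw [← hx]

end helpers3

section helpers4
variable {n : ℕ} (A : Matrix (Fin n) (Fin n) ℤ) (d : Fin n → ℚ)

lemma neg_pair_classify (a b : ℤ) (ha : a ≤ -1) (hb : b ≤ -1)
    (hab : a * b = 1 ∨ a * b = 2) :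
    (a = -1 ∧ b = -1) ∨ (a = -1 ∧ b = -2) ∨ (a = -2 ∧ b = -1) := by
  rcases hab with h | h <;>
  · have h1 : -2 ≤ a := by nlinarith
    have h2 : -2 ≤ b := by nlinarith
    interval_cases a <;> interval_cases b <;> omega

lemma connectivity (hA : IsGCM A) (hd : IsSymmetrizer A d)
    (hind : ¬ ∃ I : Set (Fin n), I.Nonempty ∧ Iᶜ.Nonempty ∧ ∀ i ∈ I, ∀ j ∈ Iᶜ, A i j = 0)
    (hlaced : ∀ i j, i ≠ j → A i j * A j i = 0 ∨ A i j * A j i = 1 ∨ A i j * A j i = 2)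
    (p : Fin n) (hp : ∀ k, d p ≤ d k) :
    ∀ j, ∃ m : ℕ, d j = 2 ^ m * d p := by
  by_contra hcon
  push_neg at hcon
  obtain ⟨j0, hj0⟩ := hcon
  push_neg at hind
  set I : Set (Fin n) := {j | ∃ m : ℕ, d j = 2 ^ m * d p} with hIdef
  have hIne : I.Nonempty := ⟨p, 0, by simp⟩
  have hIcne : Iᶜ.Nonempty := ⟨j0, fun ⟨m, hm⟩ => hj0 m hm⟩
  obtain ⟨i, hiI, j, hjI, hAij⟩ := hind I hIne hIcne
  obtain ⟨m, hm⟩ := hiI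
  have hne : i ≠ j := fun h => hjI (h ▸ (⟨m, hm⟩ : i ∈ I))
  have hAji : A j i ≠ 0 := fun h => hAij (hA.2.2 j i h)
  have hija : A i j ≤ -1 := by have := hA.2.1 i j hne; omega
  have hjia : A j i ≤ -1 := by have := hA.2.1 j i hne.symm; omega
  have hprod : A i j * A j i = 1 ∨ A i j * A j i = 2 := by
    rcases hlaced i j hne with h | h | h
    · exfalso; nlinarith
    · exact Or.inl h
    · exact Or.inr h
  have hdij := hd.2 i j
  have hdpos := hd.1
  apply hjI
  rcases neg_pair_classify (A i j) (A j i) hija hjia hprod with ⟨h1, h2⟩ | ⟨h1, h2⟩ | ⟨h1, h2⟩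
  · refine ⟨m, ?_⟩
    rw [h1, h2] at hdij
    push_cast at hdij
    rw [← hm]; linarith
  · -- d j = d i / 2
    rw [h1, h2] at hdij
    push_cast at hdij
    -- hdij : d i * (-1) = d j * (-2), so d j = d i / 2
    cases m with
    | zero =>
      exfalso
      have : d j = d p / 2 := by rw [hm] at hdij; push_cast at hdij ⊢; linarith
      have := hp j
      have := hdpos p
      linarith
    | succ m' =>
      refine ⟨m', ?_⟩
      rw [hm] at hdij
      have : (2:ℚ) ^ (m' + 1) = 2 * 2 ^ m' := by ring
      rw [this] at hdij
      linarith
  · refine ⟨m + 1, ?_⟩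
    rw [h1, h2] at hdij
    push_cast at hdij
    rw [hm] at hdij
    have : (2:ℚ) ^ (m + 1) = 2 * 2 ^ m := by ring
    rw [this]
    linarith

lemma short_row_even (hd : IsSymmetrizer A d) (i j : Fin n) (p : Fin n)
    (hdi : d i = d p) (m' : ℕ) (hdj : d j = 2 ^ (m' + 1) * d p) :
    2 ∣ A i j := by
  have hdij := hd.2 i j
  rw [hdi, hdj] at hdij
  have hdp : d p ≠ 0 := ne_of_gt (hd.1 p)
  have h' : d p * ((A i j : ℚ)) = d p * ((2:ℚ) ^ (m' + 1) * (A j i : ℚ)) := by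
    linear_combination hdij
  have hcast : ((A i j : ℚ)) = (2:ℚ) ^ (m' + 1) * (A j i : ℚ) := mul_left_cancel₀ hdp h'
  have : A i j = 2 ^ (m' + 1) * A j i := by exact_mod_cast hcast
  exact ⟨2 ^ m' * A j i, by rw [this]; ring⟩

lemma actRoot_coord_parity (p : Fin n) (hev : ∀ j, 2 ∣ A p j)
    (w : List (Fin n)) (x : Fin n → ℤ) :
    2 ∣ (actRoot A w x p - x p) := by
  induction w with
  | nil => simp [actRoot]
  | cons k w ih =>
    rw [actRoot_cons]
    have hstep : sRoot A k (actRoot A w x) p - actRoot A w x p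
        = -(if p = k then ∑ j, A k j * (actRoot A w x) j else 0) := by
      show actRoot A w x p - _ - actRoot A w x p = _
      ring
    have hdvd : 2 ∣ (if p = k then ∑ j, A k j * (actRoot A w x) j else 0) := by
      split
      · next h => rw [← h]; exact Finset.dvd_sum fun j _ => (hev j).mul_right _
      · exact dvd_zero 2
    have : sRoot A k (actRoot A w x) p - x p
        = (sRoot A k (actRoot A w x) p - actRoot A w x p) + (actRoot A w x p - x p) := by ring
    rw [this, hstep]
    exact dvd_add (dvd_neg.mpr hdvd) ih

end helpers4

section helpers5
variable {n : ℕ} (A : Matrix (Fin n) (Fin n) ℤ)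

lemma zmod2_neg : ∀ a : ZMod 2, -a = a := by decide

lemma sum_row_mod2 (p q : Fin n) (hpq : p ≠ q) (hev : ∀ j, j ≠ q → 2 ∣ A p j)
    (hApq : A p q = -1) (z : Fin n → ℤ) :
    ((∑ j, A p j * z j : ℤ) : ZMod 2) = ((z q : ℤ) : ZMod 2) := by
  push_cast
  rw [Finset.sum_eq_single_of_mem q (Finset.mem_univ q)]
  · rw [hApq]; push_cast; rw [neg_one_mul, zmod2_neg]
  · intro b _ hbq
    have : ((A p b : ℤ) : ZMod 2) = 0 := (ZMod.intCast_zmod_eq_zero_iff_dvd _ 2).mpr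
      (by exact_mod_cast hev b hbq)
    rw [this, zero_mul]

lemma class_preserved (p q : Fin n) (hpq : p ≠ q)
    (hevp : ∀ j, j ≠ q → 2 ∣ A p j) (hevq : ∀ j, j ≠ p → 2 ∣ A q j)
    (hApq : A p q = -1) (hAqp : A q p = -1)
    (w : List (Fin n)) (x : Fin n → ℤ)
    (hx : ¬(((x p : ℤ) : ZMod 2) = 0 ∧ ((x q : ℤ) : ZMod 2) = 0)) :
    ¬((((actRoot A w x) p : ℤ) : ZMod 2) = 0 ∧ (((actRoot A w x) q : ℤ) : ZMod 2) = 0) := by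
  induction w with
  | nil => exact hx
  | cons k w ih =>
    rw [actRoot_cons]
    set z := actRoot A w x with hz
    have hzp : (sRoot A k z) p = z p - (if p = k then ∑ j, A k j * z j else 0) := rfl
    have hzq : (sRoot A k z) q = z q - (if q = k then ∑ j, A k j * z j else 0) := rfl
    by_cases hkp : k = p
    · subst hkp
      rw [if_pos rfl] at hzp
      rw [if_neg hpq.symm, sub_zero] at hzq
      rintro ⟨h1, h2⟩
      rw [hzq] at h2
      rw [hzp, Int.cast_sub, sum_row_mod2 A k q hpq hevp hApq z] at h1
      rw [h2, sub_zero] at h1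
      exact ih ⟨h1, h2⟩
    · by_cases hkq : k = q
      · subst hkq
        rw [if_neg hpq, sub_zero] at hzp
        rw [if_pos rfl] at hzq
        rintro ⟨h1, h2⟩
        rw [hzp] at h1
        rw [hzq, Int.cast_sub,
          sum_row_mod2 A k p (fun h => hkp h) hevq hAqp z] at h2
        rw [h1, sub_zero] at h2
        exact ih ⟨h1, h2⟩
      · rw [if_neg (fun h => hkp h.symm), sub_zero] at hzp
        rw [if_neg (fun h => hkq h.symm), sub_zero] at hzq
        rw [hzp, hzq]
        exact ih

end helpers5

section helpers6
variable {n : ℕ} (A : Matrix (Fin n) (Fin n) ℤ) (d : Fin n → ℚ)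

lemma zmod2_key : ∀ a₁ b₁ a₂ b₂ : ZMod 2, ¬(a₁ = 0 ∧ b₁ = 0) → ¬(a₂ = 0 ∧ b₂ = 0) →
    a₁ * b₂ + b₁ * a₂ = 0 → a₁ = a₂ ∧ b₁ = b₂ := by decide

lemma ortho_class_eq (hd : IsSymmetrizer A d) (p q : Fin n) (hpq : p ≠ q)
    (hpow : ∀ j, ∃ m : ℕ, d j = 2 ^ m * d p) (hdq : d q = d p)
    (hshort : ∀ j, d j = d p → j = p ∨ j = q)
    (hevp : ∀ j, j ≠ q → 2 ∣ A p j) (hevq : ∀ j, j ≠ p → 2 ∣ A q j)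
    (hApq : A p q = -1) (hAqp : A q p = -1)
    (x y : Fin n → ℤ) (hform : formQ A d x y = 0) :
    ((x p : ℤ) : ZMod 2) * ((y q : ℤ) : ZMod 2)
      + ((x q : ℤ) : ZMod 2) * ((y p : ℤ) : ZMod 2) = 0 := by
  have hdp : d p ≠ 0 := ne_of_gt (hd.1 p)
  have hCex : ∀ i j, ∃ c : ℤ, (c : ℚ) * d p = d i * A i j := by
    intro i j
    obtain ⟨m, hm⟩ := hpow i
    exact ⟨2 ^ m * A i j, by rw [hm]; push_cast; ring⟩
  choose C hC using hCex
  have hcan : ∀ (c : ℤ) (r : ℚ), (c : ℚ) * d p = r * d p → (c : ℚ) = r :=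
    fun c r h => mul_right_cancel₀ hdp h
  have hCpq : C p q = -1 := by
    have := hcan (C p q) (-1) (by rw [hC p q, hApq]; push_cast; ring)
    exact_mod_cast this
  have hCqp : C q p = -1 := by
    have := hcan (C q p) (-1) (by rw [hC q p, hAqp, hdq]; push_cast; ring)
    exact_mod_cast this
  have hCeven : ∀ i j, ¬(i = p ∧ j = q) → ¬(i = q ∧ j = p) → 2 ∣ C i j := by
    intro i j h1 h2
    obtain ⟨m, hm⟩ := hpow i
    cases m with
    | zero =>
      have hdip : d i = d p := by rw [hm]; ring
      rcases hshort i hdip with hip | hiq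
      · subst hip
        have hjq : j ≠ q := fun h => h1 ⟨rfl, h⟩
        have h3 : (C i j : ℚ) = ((A i j : ℤ) : ℚ) := hcan _ _ (by rw [hC i j, hdip]; ring)
        have h4 : C i j = A i j := by exact_mod_cast h3
        rw [h4]
        exact hevp j hjq
      · subst hiq
        have hjp : j ≠ p := fun h => h2 ⟨rfl, h⟩
        have h3 : (C i j : ℚ) = ((A i j : ℤ) : ℚ) := hcan _ _ (by rw [hC i j, hdq]; ring)
        have h4 : C i j = A i j := by exact_mod_cast h3
        rw [h4]
        exact hevq j hjp
    | succ m' =>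
      have h3 : (C i j : ℚ) = ((2 ^ (m' + 1) * A i j : ℤ) : ℚ) :=
        hcan _ _ (by rw [hC i j, hm]; push_cast; ring)
      have h4 : C i j = 2 ^ (m' + 1) * A i j := by exact_mod_cast h3
      exact ⟨2 ^ m' * A i j, by rw [h4]; ring⟩
  have key : (((∑ i, ∑ j, C i j * x i * y j : ℤ)) : ℚ) * d p = formQ A d x y := by
    simp only [formQ]
    push_cast
    rw [Finset.sum_mul]
    refine Finset.sum_congr rfl fun i _ => ?_
    rw [Finset.sum_mul]
    refine Finset.sum_congr rfl fun j _ => ?_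
    linear_combination ((x i : ℚ) * (y j : ℚ)) * hC i j
  have hS0 : (∑ i, ∑ j, C i j * x i * y j : ℤ) = 0 := by
    rw [hform] at key
    have h0 : ((∑ i, ∑ j, C i j * x i * y j : ℤ) : ℚ) = 0 := by
      rcases mul_eq_zero.mp key with h' | h'
      · exact h'
      · exact absurd h' hdp
    exact_mod_cast h0
  have hgp : (∑ j, ((C p j : ℤ) : ZMod 2) * ((x p : ℤ) : ZMod 2) * ((y j : ℤ) : ZMod 2))
      = ((x p : ℤ) : ZMod 2) * ((y q : ℤ) : ZMod 2) := by
    rw [Finset.sum_eq_single_of_mem q (Finset.mem_univ q)]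
    · rw [hCpq, show ((-1 : ℤ) : ZMod 2) = 1 from by decide, one_mul]
    · intro b _ hbq
      have h0 : ((C p b : ℤ) : ZMod 2) = 0 := (ZMod.intCast_zmod_eq_zero_iff_dvd _ 2).mpr
        (by exact_mod_cast hCeven p b (fun h => hbq h.2) (fun h => hpq h.1))
      rw [h0, zero_mul, zero_mul]
  have hgq : (∑ j, ((C q j : ℤ) : ZMod 2) * ((x q : ℤ) : ZMod 2) * ((y j : ℤ) : ZMod 2))
      = ((x q : ℤ) : ZMod 2) * ((y p : ℤ) : ZMod 2) := by
    rw [Finset.sum_eq_single_of_mem p (Finset.mem_univ p)]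
    · rw [hCqp, show ((-1 : ℤ) : ZMod 2) = 1 from by decide, one_mul]
    · intro b _ hbp
      have h0 : ((C q b : ℤ) : ZMod 2) = 0 := (ZMod.intCast_zmod_eq_zero_iff_dvd _ 2).mpr
        (by exact_mod_cast hCeven q b (fun h => hpq h.1.symm) (fun h => hbp h.2))
      rw [h0, zero_mul, zero_mul]
  have hred : ((∑ i, ∑ j, C i j * x i * y j : ℤ) : ZMod 2)
      = ((x p : ℤ) : ZMod 2) * ((y q : ℤ) : ZMod 2)
        + ((x q : ℤ) : ZMod 2) * ((y p : ℤ) : ZMod 2) := by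
    push_cast
    calc (∑ i, ∑ j, ((C i j : ℤ) : ZMod 2) * ((x i : ℤ) : ZMod 2) * ((y j : ℤ) : ZMod 2))
        = ∑ i ∈ ({p, q} : Finset (Fin n)),
            ∑ j, ((C i j : ℤ) : ZMod 2) * ((x i : ℤ) : ZMod 2) * ((y j : ℤ) : ZMod 2) := by
          refine (Finset.sum_subset (Finset.subset_univ _) fun i _ hi => ?_).symm
          simp only [Finset.mem_insert, Finset.mem_singleton, not_or] at hi
          apply Finset.sum_eq_zero
          intro j _
          have h0 : ((C i j : ℤ) : ZMod 2) = 0 := (ZMod.intCast_zmod_eq_zero_iff_dvd _ 2).mpr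
            (by exact_mod_cast hCeven i j (fun h => hi.1 h.1) (fun h => hi.2 h.1))
          rw [h0, zero_mul, zero_mul]
      _ = _ := by rw [Finset.sum_pair hpq, hgp, hgq]
  rw [hS0] at hred
  simpa using hred.symm

end helpers6


/-- Let `A` be an indecomposable, doubly-laced symmetrizable GCM satisfying
condition (★), whose set of short simple roots `X_sh = {i : dᵢ minimal}` is `{p}` (type
`A₁`) or `{p, q}` of type `A₂`. If `β₁, β₂ ∈ W·{α_s : s ∈ X_sh}` satisfy
`⟨β₁∨,β₂⟩ = ⟨β₂∨,β₁⟩ = 0` (type `A₁ × A₁`), then `β₂ − β₁` is a real root; consequently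
there is no π-system of type `A₁ × A₁` contained wholly in the shortest real roots. -/
theorem A1xA1_short_diff_is_root_doubly {n : ℕ} (A : Matrix (Fin n) (Fin n) ℤ)
    (hA : IsGCM A) (d : Fin n → ℚ) (hd : IsSymmetrizer A d)
    (hind : ¬ ∃ I : Set (Fin n), I.Nonempty ∧ Iᶜ.Nonempty ∧
      ∀ i ∈ I, ∀ j ∈ Iᶜ, A i j = 0)
    (hlaced : ∀ i j, i ≠ j → A i j * A j i = 0 ∨ A i j * A j i = 1 ∨ A i j * A j i = 2)
    (hattained : ∃ i j, i ≠ j ∧ A i j * A j i = 2)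
    (hstar : ∀ γ : Fin n → ℤ, γ ≠ 0 → 0 < formQ A d γ γ →
      (∀ j, ∃ c : ℤ, (γ j : ℚ) * formQ A d (Pi.single j 1) (Pi.single j 1)
          = (c : ℚ) * formQ A d γ γ) →
      ∃ (w : List (Fin n)) (q : Fin n), γ = actRoot A w (Pi.single q 1))
    (p q : Fin n)
    (hsh : (∀ i, (∀ k, d i ≤ d k) ↔ i = p) ∨
      (p ≠ q ∧ A p q = -1 ∧ A q p = -1 ∧ (∀ i, (∀ k, d i ≤ d k) ↔ (i = p ∨ i = q)))) :
    (∀ (w₁ w₂ : List (Fin n)) (r₁ r₂ : Fin n),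
      (∀ k, d r₁ ≤ d k) → (∀ k, d r₂ ≤ d k) →
      pairing A (actCoroot A w₁ (Pi.single r₁ 1)) (actRoot A w₂ (Pi.single r₂ 1)) = 0 →
      pairing A (actCoroot A w₂ (Pi.single r₂ 1)) (actRoot A w₁ (Pi.single r₁ 1)) = 0 →
      ∃ (w : List (Fin n)) (s : Fin n),
        actRoot A w₂ (Pi.single r₂ 1) - actRoot A w₁ (Pi.single r₁ 1)
          = actRoot A w (Pi.single s 1))
    ∧
    ¬ ∃ (w₁ w₂ : List (Fin n)) (r₁ r₂ : Fin n),
      (∀ k, d r₁ ≤ d k) ∧ (∀ k, d r₂ ≤ d k) ∧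
      pairing A (actCoroot A w₁ (Pi.single r₁ 1)) (actRoot A w₂ (Pi.single r₂ 1)) = 0 ∧
      pairing A (actCoroot A w₂ (Pi.single r₂ 1)) (actRoot A w₁ (Pi.single r₁ 1)) = 0 ∧
      ¬ ∃ (w : List (Fin n)) (s : Fin n),
        actRoot A w₂ (Pi.single r₂ 1) - actRoot A w₁ (Pi.single r₁ 1)
          = actRoot A w (Pi.single s 1) := by
  have h2 : ∀ k, A k k = 2 := hA.1
  have hdp_min : ∀ k, d p ≤ d k := by
    rcases hsh with h | h
    · exact (h p).mpr rfl
    · exact (h.2.2.2 p).mpr (Or.inl rfl)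
  have hpow : ∀ j, ∃ m : ℕ, d j = 2 ^ m * d p :=
    connectivity A d hA hd hind hlaced p hdp_min
  have main : ∀ (w₁ w₂ : List (Fin n)) (r₁ r₂ : Fin n),
      (∀ k, d r₁ ≤ d k) → (∀ k, d r₂ ≤ d k) →
      pairing A (actCoroot A w₁ (Pi.single r₁ 1)) (actRoot A w₂ (Pi.single r₂ 1)) = 0 →
      pairing A (actCoroot A w₂ (Pi.single r₂ 1)) (actRoot A w₁ (Pi.single r₁ 1)) = 0 →
      ∃ (w : List (Fin n)) (s : Fin n),
        actRoot A w₂ (Pi.single r₂ 1) - actRoot A w₁ (Pi.single r₁ 1)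
          = actRoot A w (Pi.single s 1) := by
    intro w₁ w₂ r₁ r₂ hm1 hm2 hp12 hp21
    set β₁ := actRoot A w₁ (Pi.single r₁ 1) with hβ₁def
    set β₂ := actRoot A w₂ (Pi.single r₂ 1) with hβ₂def
    have hdr₁ : d r₁ = d p := le_antisymm (hm1 p) (hdp_min r₁)
    have hdr₂ : d r₂ = d p := le_antisymm (hm2 p) (hdp_min r₂)
    have hf12 : formQ A d β₁ β₂ = 0 := by
      rw [hβ₁def, formQ_eq_pairing A d hd.2 h2, hp12]
      simp
    have hf21 : formQ A d β₂ β₁ = 0 := by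
      rw [hβ₂def, formQ_eq_pairing A d hd.2 h2, hp21]
      simp
    have hββ₁ : formQ A d β₁ β₁ = 2 * d r₁ := by
      rw [hβ₁def, formQ_act A d hd.2 h2, formQ_single_single, h2 r₁]
      push_cast
      ring
    have hββ₂ : formQ A d β₂ β₂ = 2 * d r₂ := by
      rw [hβ₂def, formQ_act A d hd.2 h2, formQ_single_single, h2 r₂]
      push_cast
      ring
    have hγγ : formQ A d (β₂ - β₁) (β₂ - β₁) = 4 * d p := by
      rw [formQ_sub_left, formQ_sub_right, formQ_sub_right, hf12, hf21, hββ₁, hββ₂, hdr₁, hdr₂]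
      ring
    have hγne : β₂ - β₁ ≠ 0 := by
      intro h
      have heq : β₂ = β₁ := sub_eq_zero.mp h
      have h22 : pairing A (actCoroot A w₂ (Pi.single r₂ 1)) β₂ = 2 := by
        rw [hβ₂def, pairing_act A h2, pairing_single_single, h2 r₂]
        ring
      rw [heq, hp21] at h22
      exact two_ne_zero h22.symm
    have hpar : ∀ j, (∀ k, d j ≤ d k) → 2 ∣ (β₂ - β₁) j := by
      rcases hsh with hsh1 | ⟨hpq, hApq, hAqp, hsh2⟩
      · -- case A₁ : X_sh = {p}
        have hr₁ : r₁ = p := (hsh1 r₁).mp hm1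
        have hr₂ : r₂ = p := (hsh1 r₂).mp hm2
        have hlong : ∀ j, j ≠ p → ∃ m', d j = 2 ^ (m' + 1) * d p := by
          intro j hj
          obtain ⟨m, hm⟩ := hpow j
          cases m with
          | zero =>
            exfalso
            apply hj
            have hdj : d j = d p := by rw [hm]; ring
            exact (hsh1 j).mp (fun k => hdj ▸ hdp_min k)
          | succ m' => exact ⟨m', hm⟩
        have hev : ∀ j, 2 ∣ A p j := by
          intro j
          by_cases hj : j = p
          · subst hj; rw [h2]
          · obtain ⟨m', hm'⟩ := hlong j hj
            exact short_row_even A d hd p j p rfl m' hm'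
        intro j hjmin
        have hj : j = p := (hsh1 j).mp hjmin
        subst hj
        have e1 := actRoot_coord_parity A j hev w₁ (Pi.single r₁ 1)
        have e2 := actRoot_coord_parity A j hev w₂ (Pi.single r₂ 1)
        have hx1 : (Pi.single r₁ 1 : Fin n → ℤ) j = 1 := by rw [hr₁]; simp
        have hx2 : (Pi.single r₂ 1 : Fin n → ℤ) j = 1 := by rw [hr₂]; simp
        rw [← hβ₁def, hx1] at e1
        rw [← hβ₂def, hx2] at e2
        have hsplit : (β₂ - β₁) j = (β₂ j - 1) - (β₁ j - 1) := by
          simp [Pi.sub_apply]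
        rw [hsplit]
        exact dvd_sub e2 e1
      · -- case A₂ : X_sh = {p, q}
        have hdq : d q = d p := le_antisymm (((hsh2 q).mpr (Or.inr rfl)) p) (hdp_min q)
        have hshort : ∀ j, d j = d p → j = p ∨ j = q :=
          fun j hj => (hsh2 j).mp (fun k => hj ▸ hdp_min k)
        have hlong : ∀ j, j ≠ p → j ≠ q → ∃ m', d j = 2 ^ (m' + 1) * d p := by
          intro j hjp hjq
          obtain ⟨m, hm⟩ := hpow j
          cases m with
          | zero =>
            exfalso
            have hdj : d j = d p := by rw [hm]; ring
            rcases hshort j hdj with h | h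
            · exact hjp h
            · exact hjq h
          | succ m' => exact ⟨m', hm⟩
        have hevp : ∀ j, j ≠ q → 2 ∣ A p j := by
          intro j hjq
          by_cases hjp : j = p
          · subst hjp; rw [h2]
          · obtain ⟨m', hm'⟩ := hlong j hjp hjq
            exact short_row_even A d hd p j p rfl m' hm'
        have hevq : ∀ j, j ≠ p → 2 ∣ A q j := by
          intro j hjp
          by_cases hjq : j = q
          · subst hjq; rw [h2]
          · obtain ⟨m', hm'⟩ := hlong j hjp hjq
            exact short_row_even A d hd q j p hdq m' hm'
        have hx1 : ¬((((Pi.single r₁ 1 : Fin n → ℤ) p : ℤ) : ZMod 2) = 0 ∧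
            (((Pi.single r₁ 1 : Fin n → ℤ) q : ℤ) : ZMod 2) = 0) := by
          rcases hshort r₁ hdr₁ with h | h <;> subst h
          · intro hh
            apply one_ne_zero (α := ZMod 2)
            have : (Pi.single r₁ 1 : Fin n → ℤ) r₁ = 1 := by simp
            rw [this] at hh
            exact_mod_cast hh.1
          · intro hh
            apply one_ne_zero (α := ZMod 2)
            have : (Pi.single r₁ 1 : Fin n → ℤ) r₁ = 1 := by simp
            rw [this] at hh
            exact_mod_cast hh.2
        have hx2 : ¬((((Pi.single r₂ 1 : Fin n → ℤ) p : ℤ) : ZMod 2) = 0 ∧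
            (((Pi.single r₂ 1 : Fin n → ℤ) q : ℤ) : ZMod 2) = 0) := by
          rcases hshort r₂ hdr₂ with h | h <;> subst h
          · intro hh
            apply one_ne_zero (α := ZMod 2)
            have : (Pi.single r₂ 1 : Fin n → ℤ) r₂ = 1 := by simp
            rw [this] at hh
            exact_mod_cast hh.1
          · intro hh
            apply one_ne_zero (α := ZMod 2)
            have : (Pi.single r₂ 1 : Fin n → ℤ) r₂ = 1 := by simp
            rw [this] at hh
            exact_mod_cast hh.2
        have hc1 := class_preserved A p q hpq hevp hevq hApq hAqp w₁ (Pi.single r₁ 1) hx1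
        have hc2 := class_preserved A p q hpq hevp hevq hApq hAqp w₂ (Pi.single r₂ 1) hx2
        rw [← hβ₁def] at hc1
        rw [← hβ₂def] at hc2
        have hortho := ortho_class_eq A d hd p q hpq hpow hdq hshort hevp hevq hApq hAqp
          β₁ β₂ hf12
        have hkey := zmod2_key _ _ _ _ hc1 hc2 hortho
        intro j hjmin
        have hdj : d j = d p := le_antisymm (hjmin p) (hdp_min j)
        have hsub : (β₂ - β₁) j = β₂ j - β₁ j := by simp [Pi.sub_apply]
        rcases hshort j hdj with hj | hj <;> subst hj
        · have hz : ((β₂ j - β₁ j : ℤ) : ZMod 2) = 0 := by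
            push_cast
            rw [hkey.1]
            ring
          rw [hsub]
          exact_mod_cast (ZMod.intCast_zmod_eq_zero_iff_dvd _ 2).mp hz
        · have hz : ((β₂ j - β₁ j : ℤ) : ZMod 2) = 0 := by
            push_cast
            rw [hkey.2]
            ring
          rw [hsub]
          exact_mod_cast (ZMod.intCast_zmod_eq_zero_iff_dvd _ 2).mp hz
    have hint : ∀ j, ∃ c : ℤ, ((β₂ - β₁) j : ℚ) * formQ A d (Pi.single j 1) (Pi.single j 1)
        = (c : ℚ) * formQ A d (β₂ - β₁) (β₂ - β₁) := by
      intro j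
      have hfj : formQ A d (Pi.single j 1) (Pi.single j 1) = 2 * d j := by
        rw [formQ_single_single, h2 j]
        push_cast
        ring
      rw [hfj, hγγ]
      by_cases hjmin : ∀ k, d j ≤ d k
      · obtain ⟨c, hc⟩ := hpar j hjmin
        have hdj : d j = d p := le_antisymm (hjmin p) (hdp_min j)
        exact ⟨c, by rw [hc, hdj]; push_cast; ring⟩
      · obtain ⟨m, hm⟩ := hpow j
        cases m with
        | zero =>
          exfalso
          apply hjmin
          intro k
          have hdj : d j = d p := by rw [hm]; ring
          exact hdj ▸ hdp_min k
        | succ m' =>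
          exact ⟨(β₂ - β₁) j * 2 ^ m', by rw [hm]; push_cast; ring⟩
    obtain ⟨w, s, hws⟩ := hstar (β₂ - β₁) hγne
      (by rw [hγγ]; linarith [hd.1 p]) hint
    exact ⟨w, s, hws⟩
  refine ⟨main, ?_⟩
  rintro ⟨w₁, w₂, r₁, r₂, hm1, hm2, hp12, hp21, hno⟩
  exact hno (main w₁ w₂ r₁ r₂ hm1 hm2 hp12 hp21)
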